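/- Let m, n be positive integers and let F be a binary image contained in {1,…,m} × {1,…,n} with row sums r_1,…,r_m and column sums c_1,…,c_n, such that r_1 = n and r_m = 0. Define b_i = #{j ∈ {1,…,n} : c_j ≥ i} and d_i = b_i − r_i for i = 1,…,m, and let L_h be the length of the horizontal boundary of F. Then for every integer t ≥ 0 and every choice of indices 1 ≤ i_1 < i_2 < ⋯ < i_{2t+1} ≤ m one has L_h ≥ 2n + Σ_{s=1}^{t} (d_{i_{2s−1}} − d_{i_{2s}}) + 2·d_{i_{2t+1}}. -/

import Mathlib

/-- The row sum `r i` of a binary image `F`: the number of points of `F` in row `i`. -/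
def rowSum (F : Finset (ℤ × ℤ)) (i : ℤ) : ℕ := (F.filter fun p => p.1 = i).card

/-- The column sum `c j` of a binary image `F`: the number of points of `F` in column `j`. -/
def colSum (F : Finset (ℤ × ℤ)) (j : ℤ) : ℕ := (F.filter fun p => p.2 = j).card

/-- The length of the horizontal boundary of `F`: the number of pairs
`((i,j),(i',j'))` with `j = j'`, `|i - i'| = 1`, `(i,j) ∈ F` and `(i',j') ∉ F`. -/
noncomputable def horizBoundaryLen (F : Finset (ℤ × ℤ)) : ℕ :=
  Set.ncard {q : (ℤ × ℤ) × (ℤ × ℤ) |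
    q.1.2 = q.2.2 ∧ |q.1.1 - q.2.1| = 1 ∧ q.1 ∈ F ∧ q.2 ∉ F}

namespace BLB

noncomputable section
open Classical

def chi (S : Finset ℤ) (i : ℤ) : ℤ := if i ∈ S then 1 else 0

def Vv (S : Finset ℤ) (a b : ℤ) : ℤ := ∑ i ∈ Finset.Ico a b, |chi S (i+1) - chi S i|

lemma chi_mem {S : Finset ℤ} {i : ℤ} (h : i ∈ S) : chi S i = 1 := if_pos h
lemma chi_not {S : Finset ℤ} {i : ℤ} (h : i ∉ S) : chi S i = 0 := if_neg h

lemma Vv_nonneg (S : Finset ℤ) (a b : ℤ) : 0 ≤ Vv S a b :=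
  Finset.sum_nonneg fun _ _ => abs_nonneg _

lemma Vv_add (S : Finset ℤ) {a b c : ℤ} (hab : a ≤ b) (hbc : b ≤ c) :
    Vv S a c = Vv S a b + Vv S b c := by
  unfold Vv
  rw [← Finset.Ico_union_Ico_eq_Ico hab hbc,
    Finset.sum_union (Finset.Ico_disjoint_Ico_consecutive a b c)]

lemma sum_tel (f : ℤ → ℤ) (a : ℤ) : ∀ b, a ≤ b →
    (∑ i ∈ Finset.Ico a b, (f (i+1) - f i)) = f b - f a := by
  refine Int.le_induction ?_ ?_
  · simp
  · intro n hn ih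
    rw [show Finset.Ico a (n+1) = insert n (Finset.Ico a n) by
      ext k; simp only [Finset.mem_Ico, Finset.mem_insert]; omega]
    rw [Finset.sum_insert (by simp), ih]
    ring

lemma Vv_ge (S : Finset ℤ) {a b : ℤ} (h : a ≤ b) : |chi S b - chi S a| ≤ Vv S a b := by
  rw [← sum_tel (chi S) a b h]
  exact Finset.abs_sum_le_sum_abs _ _

lemma Vv_jump2 (S : Finset ℤ) {a p b : ℤ} (h1 : a ≤ p) (h2 : p ≤ b) :
    |chi S p - chi S a| + |chi S b - chi S p| ≤ Vv S a b := by
  rw [Vv_add S h1 h2]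
  have := Vv_ge S h1; have := Vv_ge S h2; linarith

lemma Vv_jump3 (S : Finset ℤ) {a p q b : ℤ} (h1 : a ≤ p) (h2 : p ≤ q) (h3 : q ≤ b) :
    |chi S p - chi S a| + |chi S q - chi S p| + |chi S b - chi S q| ≤ Vv S a b := by
  rw [Vv_add S h1 (le_trans h2 h3), Vv_add S h2 h3]
  have := Vv_ge S h1; have := Vv_ge S h2; have := Vv_ge S h3; linarith

def cc (S : Finset ℤ) : ℤ := (S.card : ℤ)
def gg (S : Finset ℤ) (i : ℤ) : ℤ := if i ≤ cc S then 1 else 0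
def ee (S : Finset ℤ) (i : ℤ) : ℤ := gg S i - chi S i
def Wp (S : Finset ℤ) (x : ℤ) : Prop := ∃ p, x ≤ p ∧ p ∈ S
def Spp (S : Finset ℤ) (x : ℤ) : Prop := ∃ p, x ≤ p ∧ cc S < p ∧ p ∈ S
def Hop (S : Finset ℤ) (x : ℤ) : Prop := ∃ q, x ≤ q ∧ q ≤ cc S ∧ q ∉ S
def Bb (S : Finset ℤ) (x : ℤ) : ℤ :=
  if Wp S x ∧ ¬(x ≤ cc S ∧ Spp S x ∧ (Hop S x ↔ x ∉ S)) then 1 else 0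

lemma Bb_nonneg (S : Finset ℤ) (x : ℤ) : 0 ≤ Bb S x := by
  unfold Bb; split <;> norm_num

lemma Bb_le_one (S : Finset ℤ) (x : ℤ) : Bb S x ≤ 1 := by
  unfold Bb; split <;> norm_num

section Mass

variable {M : ℤ} {S : Finset ℤ}

lemma mass_ge (hS : S ⊆ Finset.Icc 1 M) {x : ℤ} (hx1 : 1 ≤ x) (hxc : x ≤ cc S) :
    ∃ p, x ≤ p ∧ p ∈ S := by
  by_contra h
  push_neg at h
  have hsub : S ⊆ Finset.Icc 1 (x-1) := by
    intro p hp
    have h2 := Finset.mem_Icc.1 (hS hp)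
    rw [Finset.mem_Icc]
    refine ⟨h2.1, ?_⟩
    by_contra hlt
    push_neg at hlt
    exact h p (by omega) hp
  have hcard := Finset.card_le_card hsub
  rw [Int.card_Icc] at hcard
  unfold cc at hxc
  omega

lemma hole_surplus (hS : S ⊆ Finset.Icc 1 M) {q : ℤ} (h1q : 1 ≤ q) (hqc : q ≤ cc S)
    (hq : q ∉ S) : ∃ p, cc S < p ∧ p ∈ S := by
  by_contra h
  push_neg at h
  have hsub : S ⊆ (Finset.Icc 1 (cc S)).erase q := by
    intro p hp
    rw [Finset.mem_erase, Finset.mem_Icc]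
    refine ⟨?_, (Finset.mem_Icc.1 (hS hp)).1, ?_⟩
    · rintro rfl; exact hq hp
    · by_contra hc
      push_neg at hc
      exact h p hc hp
  have hcard := Finset.card_le_card hsub
  have h2 : ((Finset.Icc 1 (cc S)).erase q).card = (Finset.Icc 1 (cc S)).card - 1 :=
    Finset.card_erase_of_mem (Finset.mem_Icc.2 ⟨h1q, hqc⟩)
  rw [h2, Int.card_Icc] at hcard
  unfold cc at *
  omega

lemma surplus_hole {p : ℤ} (hp : p ∈ S) (hcp : cc S < p) :
    ∃ q, 1 ≤ q ∧ q ≤ cc S ∧ q ∉ S := by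
  by_contra h
  push_neg at h
  have hsub : insert p (Finset.Icc 1 (cc S)) ⊆ S := by
    intro r hr
    rcases Finset.mem_insert.1 hr with rfl | hr
    · exact hp
    · rw [Finset.mem_Icc] at hr
      exact h r hr.1 hr.2
  have hcard := Finset.card_le_card hsub
  rw [Finset.card_insert_of_notMem (by rw [Finset.mem_Icc]; omega),
      Int.card_Icc] at hcard
  unfold cc at *
  omega

end Mass

section Global

def colset (F : Finset (ℤ × ℤ)) (j : ℤ) : Finset ℤ :=
  (F.filter fun p => p.2 = j).image Prod.fst

lemma mem_colset {F : Finset (ℤ × ℤ)} {j i : ℤ} : i ∈ colset F j ↔ (i, j) ∈ F := by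
  unfold colset
  simp only [Finset.mem_image, Finset.mem_filter]
  constructor
  · rintro ⟨⟨a, b⟩, ⟨hpF, rfl⟩, rfl⟩
    exact hpF
  · intro h
    exact ⟨(i, j), ⟨h, rfl⟩, rfl⟩

lemma card_colset (F : Finset (ℤ × ℤ)) (j : ℤ) : (colset F j).card = colSum F j := by
  unfold colset colSum
  apply Finset.card_image_of_injOn
  intro p hp q hq hpq
  simp only [Finset.coe_filter, Set.mem_setOf_eq] at hp hq
  exact Prod.ext hpq (hp.2.trans hq.2.symm)

def DnF (F : Finset (ℤ × ℤ)) : Finset (ℤ × ℤ) := F.filter fun p => (p.1 + 1, p.2) ∉ F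

def UpF (F : Finset (ℤ × ℤ)) : Finset (ℤ × ℤ) := F.filter fun p => (p.1 - 1, p.2) ∉ F

lemma horiz_eq (F : Finset (ℤ × ℤ)) :
    horizBoundaryLen F = (DnF F).card + (UpF F).card := by
  have hdisj : Disjoint ((DnF F).image fun p => (p, (p.1 + 1, p.2)))
      ((UpF F).image fun p => (p, (p.1 - 1, p.2))) := by
    rw [Finset.disjoint_left]
    rintro q hq1 hq2
    simp only [Finset.mem_image] at hq1 hq2
    obtain ⟨p, -, rfl⟩ := hq1
    obtain ⟨p', -, heq⟩ := hq2
    have h1 : p' = p := congrArg Prod.fst heq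
    subst h1
    have h2 := congrArg (fun q : (ℤ × ℤ) × (ℤ × ℤ) => q.2.1) heq
    simp only at h2
    omega
  have hset : {q : (ℤ × ℤ) × (ℤ × ℤ) |
      q.1.2 = q.2.2 ∧ |q.1.1 - q.2.1| = 1 ∧ q.1 ∈ F ∧ q.2 ∉ F}
      = ↑(((DnF F).image fun p => (p, (p.1 + 1, p.2))) ∪
          ((UpF F).image fun p => (p, (p.1 - 1, p.2)))) := by
    ext ⟨⟨a, b⟩, ⟨c, d⟩⟩
    simp only [Set.mem_setOf_eq, Finset.coe_union, Set.mem_union, Finset.mem_coe,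
      Finset.mem_image, DnF, UpF, Finset.mem_filter]
    constructor
    · rintro ⟨hbd, habs, hF1, hF2⟩
      subst hbd
      have hc : c = a + 1 ∨ c = a - 1 := by
        rcases (abs_eq (by norm_num : (0:ℤ) ≤ 1)).1 habs with h | h
        · right; omega
        · left; omega
      rcases hc with rfl | rfl
      · exact Or.inl ⟨(a, b), ⟨hF1, hF2⟩, rfl⟩
      · exact Or.inr ⟨(a, b), ⟨hF1, hF2⟩, rfl⟩
    · rintro (⟨⟨u, v⟩, ⟨hpF, hpn⟩, heq⟩ | ⟨⟨u, v⟩, ⟨hpF, hpn⟩, heq⟩) <;>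
        · simp only [Prod.mk.injEq] at heq
          obtain ⟨⟨rfl, rfl⟩, rfl, rfl⟩ := heq
          refine ⟨rfl, by norm_num, hpF, hpn⟩
  rw [horizBoundaryLen, hset, Set.ncard_coe_finset,
    Finset.card_union_of_disjoint hdisj,
    Finset.card_image_of_injective _ (fun p q h => congrArg Prod.fst h),
    Finset.card_image_of_injective _ (fun p q h => congrArg Prod.fst h)]


def DnCol (F : Finset (ℤ × ℤ)) (M j : ℤ) : Finset ℤ :=
  (Finset.Ico 0 M).filter fun i => i ∈ colset F j ∧ i + 1 ∉ colset F j

def UpCol (F : Finset (ℤ × ℤ)) (M j : ℤ) : Finset ℤ :=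
  (Finset.Ico 0 M).filter fun i => i ∉ colset F j ∧ i + 1 ∈ colset F j

lemma Vv_col (F : Finset (ℤ × ℤ)) (M j : ℤ) :
    Vv (colset F j) 0 M = ((DnCol F M j).card : ℤ) + ((UpCol F M j).card : ℤ) := by
  unfold Vv DnCol UpCol
  rw [← Finset.sum_boole, ← Finset.sum_boole, ← Finset.sum_add_distrib]
  refine Finset.sum_congr rfl (fun i _ => ?_)
  by_cases h1 : i ∈ colset F j <;> by_cases h2 : (i + 1) ∈ colset F j <;>
    simp [chi, h1, h2]

lemma dn_decomp (F : Finset (ℤ × ℤ)) (m n : ℕ)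
    (hF : ∀ p ∈ F, p.1 ∈ Finset.Icc (1 : ℤ) (m : ℤ) ∧ p.2 ∈ Finset.Icc (1 : ℤ) (n : ℤ))
    (hMrow : ∀ j : ℤ, ((m : ℤ), j) ∉ F) :
    (DnF F).card = ∑ j ∈ Finset.Icc (1 : ℤ) (n : ℤ), (DnCol F (m : ℤ) j).card := by
  have hfib := Finset.card_eq_sum_card_fiberwise (s := DnF F)
    (t := Finset.Icc (1 : ℤ) (n : ℤ)) (f := fun p : ℤ × ℤ => p.2)
    (fun p hp => (hF p (Finset.mem_filter.1 hp).1).2)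
  rw [hfib]
  refine Finset.sum_congr rfl (fun j _ => ?_)
  have himg : (DnF F).filter (fun p => p.2 = j) = (DnCol F (m : ℤ) j).image (fun i => (i, j)) := by
    ext ⟨a, b⟩
    simp only [DnF, DnCol, Finset.mem_filter, Finset.mem_image, Finset.mem_Ico, mem_colset]
    constructor
    · rintro ⟨⟨hab, hnext⟩, rfl⟩
      have h1 := (hF _ hab).1
      rw [Finset.mem_Icc] at h1
      have hane : a ≠ (m : ℤ) := fun h => hMrow b (h ▸ hab)
      exact ⟨a, ⟨⟨by omega, by omega⟩, hab, hnext⟩, rfl⟩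
    · rintro ⟨i, ⟨-, hiF, hinF⟩, heq⟩
      simp only [Prod.mk.injEq] at heq
      obtain ⟨rfl, rfl⟩ := heq
      exact ⟨⟨hiF, hinF⟩, rfl⟩
  rw [himg, Finset.card_image_of_injective _
    (fun p q h => by simpa using (Prod.ext_iff.1 h).1)]

lemma up_decomp (F : Finset (ℤ × ℤ)) (m n : ℕ)
    (hF : ∀ p ∈ F, p.1 ∈ Finset.Icc (1 : ℤ) (m : ℤ) ∧ p.2 ∈ Finset.Icc (1 : ℤ) (n : ℤ)) :
    (UpF F).card = ∑ j ∈ Finset.Icc (1 : ℤ) (n : ℤ), (UpCol F (m : ℤ) j).card := by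
  have hfib := Finset.card_eq_sum_card_fiberwise (s := UpF F)
    (t := Finset.Icc (1 : ℤ) (n : ℤ)) (f := fun p : ℤ × ℤ => p.2)
    (fun p hp => (hF p (Finset.mem_filter.1 hp).1).2)
  rw [hfib]
  refine Finset.sum_congr rfl (fun j _ => ?_)
  have himg : (UpF F).filter (fun p => p.2 = j)
      = (UpCol F (m : ℤ) j).image (fun i => (i + 1, j)) := by
    ext ⟨a, b⟩
    simp only [UpF, UpCol, Finset.mem_filter, Finset.mem_image, Finset.mem_Ico, mem_colset]
    constructor
    · rintro ⟨⟨hab, hprev⟩, rfl⟩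
      have h1 := (hF _ hab).1
      rw [Finset.mem_Icc] at h1
      refine ⟨a - 1, ⟨⟨by omega, by omega⟩, ?_, ?_⟩, by simp⟩
      · simpa using hprev
      · simpa using hab
    · rintro ⟨i, ⟨-, hinF, hiF⟩, heq⟩
      simp only [Prod.mk.injEq] at heq
      obtain ⟨rfl, rfl⟩ := heq
      refine ⟨⟨hiF, by simpa using hinF⟩, rfl⟩
  rw [himg, Finset.card_image_of_injective _
    (fun p q h => by simpa using (Prod.ext_iff.1 h).1)]


lemma rowSum_eq (F : Finset (ℤ × ℤ)) (n : ℕ)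
    (hFc : ∀ p ∈ F, p.2 ∈ Finset.Icc (1:ℤ) (n:ℤ)) (i : ℤ) :
    (rowSum F i : ℤ) = ∑ j ∈ Finset.Icc (1:ℤ) (n:ℤ), chi (colset F j) i := by
  have h1 : ∑ j ∈ Finset.Icc (1:ℤ) (n:ℤ), chi (colset F j) i
      = ((((Finset.Icc (1:ℤ) (n:ℤ)).filter fun j => (i, j) ∈ F)).card : ℤ) := by
    rw [← Finset.sum_boole]
    refine Finset.sum_congr rfl (fun j _ => ?_)
    unfold chi
    by_cases h : (i, j) ∈ F
    · rw [if_pos (mem_colset.2 h), if_pos h]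
    · rw [if_neg (fun hc => h (mem_colset.1 hc)), if_neg h]
  rw [h1]
  norm_cast
  unfold rowSum
  have himg : F.filter (fun p => p.1 = i)
      = ((Finset.Icc (1:ℤ) (n:ℤ)).filter fun j => (i, j) ∈ F).image (fun j => (i, j)) := by
    ext ⟨a, b⟩
    simp only [Finset.mem_filter, Finset.mem_image, Prod.mk.injEq]
    constructor
    · rintro ⟨hab, rfl⟩
      exact ⟨b, ⟨hFc _ hab, hab⟩, rfl, rfl⟩
    · rintro ⟨j, ⟨hj, hijF⟩, rfl, rfl⟩
      exact ⟨hijF, rfl⟩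
  rw [himg, Finset.card_image_of_injective _ (fun p q h => by simpa using (Prod.ext_iff.1 h).2)]

lemma bsum_eq (F : Finset (ℤ × ℤ)) (n : ℕ) (i : ℤ) :
    ∑ j ∈ Finset.Icc (1:ℤ) (n:ℤ), gg (colset F j) i
      = ((((Finset.Icc (1:ℤ) (n:ℤ)).filter fun j => i ≤ (colSum F j : ℤ))).card : ℤ) := by
  rw [← Finset.sum_boole]
  refine Finset.sum_congr rfl (fun j _ => ?_)
  unfold gg cc
  rw [card_colset]

end Global


lemma chi01 (S : Finset ℤ) (i : ℤ) : chi S i = 0 ∨ chi S i = 1 := by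
  unfold chi; split <;> simp

lemma Bb_cases (S : Finset ℤ) (x : ℤ) : Bb S x = 0 ∨ Bb S x = 1 := by
  unfold Bb; split <;> simp

lemma Bb_eq_zero {S : Finset ℤ} {x : ℤ} (h : Bb S x = 0) :
    ¬(Wp S x ∧ ¬(x ≤ cc S ∧ Spp S x ∧ (Hop S x ↔ x ∉ S))) := by
  intro hc; unfold Bb at h; rw [if_pos hc] at h; norm_num at h

lemma Bb_eq_one {S : Finset ℤ} {x : ℤ} (h : Bb S x = 1) :
    Wp S x ∧ ¬(x ≤ cc S ∧ Spp S x ∧ (Hop S x ↔ x ∉ S)) := by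
  by_contra hc; unfold Bb at h; rw [if_neg hc] at h; norm_num at h

section TLemmas

variable {M : ℤ} {S : Finset ℤ}

lemma T1 (hS : S ⊆ Finset.Icc 1 M) (h1S : (1:ℤ) ∈ S) {x : ℤ} (hx1 : 1 ≤ x)
    (hxM : x ≤ M) : 2 - Bb S x ≤ Vv S 0 x := by
  have h0S : (0:ℤ) ∉ S := fun h => by
    have := Finset.mem_Icc.1 (hS h); omega
  have base := Vv_jump2 S (show (0:ℤ) ≤ 1 by norm_num) hx1
  rw [chi_mem h1S, chi_not h0S] at base
  unfold Bb
  split_ifs with hB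
  · have := abs_nonneg (chi S x - 1)
    norm_num at base ⊢
    linarith
  · push_neg at hB
    norm_num
    by_cases hxS : x ∈ S
    · obtain ⟨hxc, hSp, hiff⟩ := hB ⟨x, le_refl x, hxS⟩
      have hHo : ¬ Hop S x := fun h => (hiff.1 h) hxS
      obtain ⟨p, hxp, hcp, hpS⟩ := hSp
      obtain ⟨q, h1q, hqc, hqS⟩ := surplus_hole hpS hcp
      have hqx : q < x := by
        by_contra hc
        push_neg at hc
        exact hHo ⟨q, hc, hqc, hqS⟩
      have h1q' : 1 < q := lt_of_le_of_ne h1q (fun h => hqS (h ▸ h1S))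
      have j3 := Vv_jump3 S (show (0:ℤ) ≤ 1 by norm_num) (le_of_lt h1q') (le_of_lt hqx)
      rw [chi_mem h1S, chi_not h0S, chi_not hqS, chi_mem hxS] at j3
      norm_num at j3
      linarith
    · rw [chi_not hxS] at base
      norm_num at base
      linarith

lemma T3 (hS : S ⊆ Finset.Icc 1 M) (hMS : M ∉ S) {x : ℤ} (hx1 : 1 ≤ x)
    (hxM : x ≤ M) : 2 * ee S x + Bb S x ≤ Vv S x M := by
  have hV := Vv_nonneg S x M
  have hB1 := Bb_le_one S x
  have hB0 := Bb_nonneg S x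
  by_cases hxS : x ∈ S
  · by_cases hg : x ≤ cc S
    · have hee : ee S x = 0 := by
        unfold ee gg; rw [if_pos hg, chi_mem hxS]; ring
      rw [hee]
      have j := Vv_ge S hxM
      rw [chi_not hMS, chi_mem hxS] at j
      norm_num at j
      linarith
    · have hee : ee S x = -1 := by
        unfold ee gg; rw [if_neg hg, chi_mem hxS]; ring
      rw [hee]; linarith
  · by_cases hg : x ≤ cc S
    · have hHo : Hop S x := ⟨x, le_refl x, hg, hxS⟩
      obtain ⟨p, hcp, hpS⟩ := hole_surplus hS hx1 hg hxS
      have hxp : x ≤ p := le_trans hg (le_of_lt hcp)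
      have hSp : Spp S x := ⟨p, hxp, hcp, hpS⟩
      have hB : Bb S x = 0 := by
        unfold Bb; rw [if_neg]
        rintro ⟨-, hcon⟩
        exact hcon ⟨hg, hSp, iff_of_true hHo hxS⟩
      have hee : ee S x = 1 := by
        unfold ee gg; rw [if_pos hg, chi_not hxS]; ring
      rw [hB, hee]
      have hpM : p ≤ M := (Finset.mem_Icc.1 (hS hpS)).2
      have j := Vv_jump2 S hxp hpM
      rw [chi_mem hpS, chi_not hxS, chi_not hMS] at j
      norm_num at j
      linarith
    · have hee : ee S x = 0 := by
        unfold ee gg; rw [if_neg hg, chi_not hxS]; ring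
      rw [hee]
      by_cases hW : Wp S x
      · obtain ⟨p, hxp, hpS⟩ := hW
        have hpM : p ≤ M := (Finset.mem_Icc.1 (hS hpS)).2
        have j := Vv_jump2 S hxp hpM
        rw [chi_mem hpS, chi_not hxS, chi_not hMS] at j
        norm_num at j
        linarith
      · have hB : Bb S x = 0 := by
          unfold Bb; rw [if_neg]
          rintro ⟨hw, -⟩
          exact hW hw
        rw [hB]; linarith

lemma T2 (hS : S ⊆ Finset.Icc 1 M) {x y z : ℤ}
    (hx1 : 1 ≤ x) (hxy : x < y) (hyz : y < z) (hzM : z ≤ M) :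
    ee S x - ee S y + (Bb S x - Bb S z) ≤ Vv S x z := by
  have hxz : x ≤ z := by omega
  have habs := Vv_jump2 S (le_of_lt hxy) (le_of_lt hyz)
  have hBz0 := Bb_nonneg S z
  have hBz1 := Bb_le_one S z
  have hVpos := Vv_nonneg S x z
  by_cases hgy : y ≤ cc S
  · -- g x = g y = 1
    have hgx : x ≤ cc S := by omega
    have heqy : ee S y = 1 - chi S y := by unfold ee gg; rw [if_pos hgy]
    have heqx : ee S x = 1 - chi S x := by unfold ee gg; rw [if_pos hgx]
    rcases Bb_cases S x with hBx | hBx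
    · rw [heqx, heqy, hBx]
      have h1 := le_abs_self (chi S y - chi S x)
      have h2 := abs_nonneg (chi S z - chi S y)
      linarith
    · rcases Bb_cases S z with hBz | hBz
      swap
      · rw [heqx, heqy, hBx, hBz]
        have h1 := le_abs_self (chi S y - chi S x)
        have h2 := abs_nonneg (chi S z - chi S y)
        linarith
      · have hzcond := Bb_eq_zero hBz
        push_neg at hzcond
        by_cases hWz : Wp S z
        · obtain ⟨hgz, hSpz, hiffz⟩ := hzcond hWz
          have hSpx : Spp S x := by
            obtain ⟨p, hzp, hcp, hpS⟩ := hSpz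
            exact ⟨p, by omega, hcp, hpS⟩
          obtain ⟨hWx, hnD⟩ := Bb_eq_one hBx
          have hxS : x ∈ S := by
            by_contra hxS
            exact hnD ⟨hgx, hSpx, iff_of_true ⟨x, le_refl x, hgx, hxS⟩ hxS⟩
          have hHox : Hop S x := by
            by_contra hHo
            exact hnD ⟨hgx, hSpx, iff_of_false hHo (not_not_intro hxS)⟩
          by_cases hzS : z ∈ S
          · obtain ⟨q, hxq, hqc, hqS⟩ := hHox
            have hnHoz : ¬ Hop S z := fun h => (hiffz.1 h) hzS
            have hqz : q < z := by
              by_contra hc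
              push_neg at hc
              exact hnHoz ⟨q, hc, hqc, hqS⟩
            have j := Vv_jump2 S hxq (le_of_lt hqz)
            rw [chi_not hqS, chi_mem hxS, chi_mem hzS] at j
            norm_num at j
            rw [heqx, heqy, hBx, hBz, chi_mem hxS]
            rcases chi01 S y with h | h <;> rw [h] <;> norm_num <;> linarith
          · rw [chi_mem hxS, chi_not hzS] at habs
            rw [heqx, heqy, hBx, hBz, chi_mem hxS]
            rcases chi01 S y with h | h <;> rw [h] at habs ⊢ <;>
              norm_num at habs ⊢ <;> linarith
        · have hzS : z ∉ S := fun h => hWz ⟨z, le_refl z, h⟩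
          by_cases hyS : y ∈ S
          · rw [chi_mem hyS, chi_not hzS] at habs
            rw [heqx, heqy, hBx, hBz, chi_mem hyS]
            rcases chi01 S x with h | h <;> rw [h] at habs ⊢ <;>
              norm_num at habs ⊢ <;> linarith
          · by_cases hxS : x ∈ S
            · rw [heqx, heqy, hBx, hBz, chi_mem hxS, chi_not hyS]
              norm_num
              linarith
            · obtain ⟨hWx, -⟩ := Bb_eq_one hBx
              obtain ⟨p, hxp, hpS⟩ := hWx
              have hpz : p < z := by
                by_contra hc
                push_neg at hc
                exact hWz ⟨p, hc, hpS⟩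
              have j := Vv_jump2 S hxp (le_of_lt hpz)
              rw [chi_mem hpS, chi_not hxS, chi_not hzS] at j
              norm_num at j
              rw [heqx, heqy, hBx, hBz, chi_not hxS, chi_not hyS]
              norm_num
              linarith
  · -- g y = 0
    have hgz : ¬ z ≤ cc S := by omega
    have heqy : ee S y = - chi S y := by unfold ee gg; rw [if_neg hgy]; ring
    have hBz_iff : Bb S z = 0 → ¬ Wp S z := by
      intro h hW
      have h2 := Bb_eq_zero h
      push_neg at h2
      exact hgz (h2 hW).1
    by_cases hgx : x ≤ cc S
    · -- crossing
      have heqx : ee S x = 1 - chi S x := by unfold ee gg; rw [if_pos hgx]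
      by_cases hxS : x ∈ S
      · rcases Bb_cases S x with hBx | hBx
        · by_cases hyS : y ∈ S
          · rcases Bb_cases S z with hBz | hBz
            · have hzS : z ∉ S := fun h => (hBz_iff hBz) ⟨z, le_refl z, h⟩
              rw [chi_mem hxS, chi_mem hyS, chi_not hzS] at habs
              norm_num at habs
              rw [heqx, heqy, hBx, hBz, chi_mem hxS, chi_mem hyS]
              norm_num
              linarith
            · rw [heqx, heqy, hBx, hBz, chi_mem hxS, chi_mem hyS]
              norm_num
              linarith
          · rw [heqx, heqy, hBx, chi_mem hxS, chi_not hyS]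
            norm_num
            linarith
        · by_cases hyS : y ∈ S
          · obtain ⟨-, hnD⟩ := Bb_eq_one hBx
            have hSpx : Spp S x := ⟨y, le_of_lt hxy, by omega, hyS⟩
            have hHox : Hop S x := by
              by_contra hHo
              exact hnD ⟨hgx, hSpx, iff_of_false hHo (not_not_intro hxS)⟩
            obtain ⟨q, hxq, hqc, hqS⟩ := hHox
            have hqy : q < y := by omega
            have j := Vv_jump3 S hxq (le_of_lt hqy) (le_of_lt hyz)
            rw [chi_not hqS, chi_mem hxS, chi_mem hyS] at j
            rcases Bb_cases S z with hBz | hBz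
            · have hzS : z ∉ S := fun h => (hBz_iff hBz) ⟨z, le_refl z, h⟩
              rw [chi_not hzS] at j
              norm_num at j
              rw [heqx, heqy, hBx, hBz, chi_mem hxS, chi_mem hyS]
              norm_num
              linarith
            · rw [heqx, heqy, hBx, hBz, chi_mem hxS, chi_mem hyS]
              have := abs_nonneg (chi S z - 1)
              norm_num at j ⊢
              linarith
          · rcases Bb_cases S z with hBz | hBz
            · have hzS : z ∉ S := fun h => (hBz_iff hBz) ⟨z, le_refl z, h⟩
              rw [chi_mem hxS, chi_not hyS, chi_not hzS] at habs
              norm_num at habs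
              rw [heqx, heqy, hBx, hBz, chi_mem hxS, chi_not hyS]
              norm_num
              linarith
            · rw [heqx, heqy, hBx, hBz, chi_mem hxS, chi_not hyS]
              norm_num
              linarith
      · -- hole at x
        have hHox : Hop S x := ⟨x, le_refl x, hgx, hxS⟩
        obtain ⟨p', hcp', hp'S⟩ := hole_surplus hS hx1 hgx hxS
        have hSpx : Spp S x := ⟨p', by omega, hcp', hp'S⟩
        have hBx : Bb S x = 0 := by
          unfold Bb; rw [if_neg]
          rintro ⟨-, hcon⟩
          exact hcon ⟨hgx, hSpx, iff_of_true hHox hxS⟩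
        by_cases hyS : y ∈ S
        · rcases Bb_cases S z with hBz | hBz
          · have hzS : z ∉ S := fun h => (hBz_iff hBz) ⟨z, le_refl z, h⟩
            rw [chi_not hxS, chi_mem hyS, chi_not hzS] at habs
            norm_num at habs
            rw [heqx, heqy, hBx, hBz, chi_not hxS, chi_mem hyS]
            norm_num
            linarith
          · rw [chi_not hxS, chi_mem hyS] at habs
            rw [heqx, heqy, hBx, hBz, chi_not hxS, chi_mem hyS]
            have := abs_nonneg (chi S z - 1)
            norm_num at habs ⊢
            linarith
        · rcases Bb_cases S z with hBz | hBz
          · have hWz := hBz_iff hBz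
            have hp'z : p' < z := by
              by_contra hc
              push_neg at hc
              exact hWz ⟨p', hc, hp'S⟩
            have hzS : z ∉ S := fun h => hWz ⟨z, le_refl z, h⟩
            have j := Vv_jump2 S (show x ≤ p' by omega) (le_of_lt hp'z)
            rw [chi_mem hp'S, chi_not hxS, chi_not hzS] at j
            norm_num at j
            rw [heqx, heqy, hBx, hBz, chi_not hxS, chi_not hyS]
            norm_num
            linarith
          · rw [heqx, heqy, hBx, hBz, chi_not hxS, chi_not hyS]
            norm_num
            linarith
    · -- g x = 0
      have heqx : ee S x = - chi S x := by unfold ee gg; rw [if_neg hgx]; ring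
      rcases Bb_cases S x with hBx | hBx
      · rw [heqx, heqy, hBx]
        have h1 := le_abs_self (chi S y - chi S x)
        have h2 := abs_nonneg (chi S z - chi S y)
        linarith
      · rcases Bb_cases S z with hBz | hBz
        swap
        · rw [heqx, heqy, hBx, hBz]
          have h1 := le_abs_self (chi S y - chi S x)
          have h2 := abs_nonneg (chi S z - chi S y)
          linarith
        · have hWz := hBz_iff hBz
          have hzS : z ∉ S := fun h => hWz ⟨z, le_refl z, h⟩
          by_cases hyS : y ∈ S
          · rw [chi_mem hyS, chi_not hzS] at habs
            rw [heqx, heqy, hBx, hBz, chi_mem hyS]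
            rcases chi01 S x with h | h <;> rw [h] at habs ⊢ <;>
              norm_num at habs ⊢ <;> linarith
          · by_cases hxS : x ∈ S
            · rw [heqx, heqy, hBx, hBz, chi_mem hxS, chi_not hyS]
              norm_num
              linarith
            · obtain ⟨hWx, -⟩ := Bb_eq_one hBx
              obtain ⟨p, hxp, hpS⟩ := hWx
              have hpz : p < z := by
                by_contra hc
                push_neg at hc
                exact hWz ⟨p, hc, hpS⟩
              have j := Vv_jump2 S hxp (le_of_lt hpz)
              rw [chi_mem hpS, chi_not hxS, chi_not hzS] at j
              norm_num at j
              rw [heqx, heqy, hBx, hBz, chi_not hxS, chi_not hyS]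
              norm_num
              linarith

end TLemmas

section Assembly

variable {M : ℤ} {S : Finset ℤ}

lemma colA (hS : S ⊆ Finset.Icc 1 M) (h1S : (1:ℤ) ∈ S) (hMS : M ∉ S) :
    ∀ (t : ℕ) (x : ℕ → ℤ), (∀ a b : ℕ, a < b → b ≤ 2*t → x a < x b) →
    (∀ s : ℕ, s ≤ 2*t → 1 ≤ x s ∧ x s ≤ M) →
    Bb S (x 0) + (∑ s ∈ Finset.range t, (ee S (x (2*s)) - ee S (x (2*s+1)))) +
      2 * ee S (x (2*t)) ≤ Vv S (x 0) M := by
  intro t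
  induction t with
  | zero =>
    intro x hmono hrange
    simp only [Finset.range_zero, Finset.sum_empty, Nat.mul_zero]
    have h := hrange 0 (by norm_num)
    have := T3 hS hMS h.1 h.2
    linarith
  | succ t ih =>
    intro x hmono hrange
    have h0 := hrange 0 (by omega)
    have h2 := hrange 2 (by omega)
    have h01 : x 0 < x 1 := hmono 0 1 (by norm_num) (by omega)
    have h12 : x 1 < x 2 := hmono 1 2 (by norm_num) (by omega)
    have hsplit : Vv S (x 0) M = Vv S (x 0) (x 2) + Vv S (x 2) M :=
      Vv_add S (by omega) h2.2
    have ht2 := T2 hS h0.1 h01 h12 h2.2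
    have hih := ih (fun s => x (s+2))
        (fun a b hab hb => hmono (a+2) (b+2) (by omega) (by omega))
        (fun s hs => hrange (s+2) (by omega))
    have hsum : (∑ s ∈ Finset.range (t+1), (ee S (x (2*s)) - ee S (x (2*s+1))))
        = (∑ s ∈ Finset.range t, (ee S (x (2*s+2)) - ee S (x (2*s+1+2))))
          + (ee S (x 0) - ee S (x 1)) := by
      rw [Finset.sum_range_succ']
      congr 1
    rw [show 2*(t+1) = 2*t+2 by ring, hsum, hsplit]
    linarith

lemma column_main (hS : S ⊆ Finset.Icc 1 M) (h1S : (1:ℤ) ∈ S) (hMS : M ∉ S)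
    (t : ℕ) (x : ℕ → ℤ) (hmono : ∀ a b : ℕ, a < b → b ≤ 2*t → x a < x b)
    (hrange : ∀ s : ℕ, s ≤ 2*t → 1 ≤ x s ∧ x s ≤ M) :
    2 + (∑ s ∈ Finset.range t, (ee S (x (2*s)) - ee S (x (2*s+1)))) +
      2 * ee S (x (2*t)) ≤ Vv S 0 M := by
  have h0 := hrange 0 (by omega)
  have hA := colA hS h1S hMS t x hmono hrange
  have hT1 := T1 hS h1S h0.1 h0.2
  have hsplit : Vv S 0 M = Vv S 0 (x 0) + Vv S (x 0) M :=
    Vv_add S (by omega) (by omega)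
  linarith

end Assembly



end
end BLB

open BLB

/-- Theorem 1, inequality (1): the lower bound
`L_h ≥ 2n + d_{i_1} - d_{i_2} + d_{i_3} - ⋯ - d_{i_{2t}} + 2 d_{i_{2t+1}}`.
Here `idx 0, idx 1, …, idx (2t)` play the role of `i_1 < i_2 < ⋯ < i_{2t+1}`. -/
theorem boundary_lower_bound_one (m n : ℕ) (hm : 0 < m) (hn : 0 < n)
    (F : Finset (ℤ × ℤ))
    (hF : ∀ p ∈ F, p.1 ∈ Finset.Icc (1 : ℤ) (m : ℤ) ∧ p.2 ∈ Finset.Icc (1 : ℤ) (n : ℤ))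
    (hr1 : rowSum F 1 = n) (hrm : rowSum F (m : ℤ) = 0)
    (b : ℤ → ℕ)
    (hb : ∀ i : ℤ, b i = ((Finset.Icc (1 : ℤ) (n : ℤ)).filter fun j => i ≤ (colSum F j : ℤ)).card)
    (d : ℤ → ℤ) (hd : ∀ i : ℤ, d i = (b i : ℤ) - (rowSum F i : ℤ))
    (t : ℕ) (idx : ℕ → ℤ)
    (hidx_mono : ∀ a b : ℕ, a < b → b ≤ 2 * t → idx a < idx b)
    (hidx_range : ∀ s : ℕ, s ≤ 2 * t → idx s ∈ Finset.Icc (1 : ℤ) (m : ℤ)) :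
    (horizBoundaryLen F : ℤ) ≥
      2 * n + (∑ s ∈ Finset.range t, (d (idx (2 * s)) - d (idx (2 * s + 1))))
        + 2 * d (idx (2 * t)) := by
  classical
  have hFr : ∀ p ∈ F, p.1 ∈ Finset.Icc (1:ℤ) (m:ℤ) := fun p hp => (hF p hp).1
  have hFc : ∀ p ∈ F, p.2 ∈ Finset.Icc (1:ℤ) (n:ℤ) := fun p hp => (hF p hp).2
  have hMrow : ∀ j : ℤ, ((m:ℤ), j) ∉ F := by
    intro j hj
    have h0 : (F.filter fun p => p.1 = (m:ℤ)) = ∅ := Finset.card_eq_zero.1 hrm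
    have h2 : ((m:ℤ), j) ∈ F.filter fun p => p.1 = (m:ℤ) := Finset.mem_filter.2 ⟨hj, rfl⟩
    rw [h0] at h2
    exact absurd h2 (Finset.notMem_empty _)
  have h1row : ∀ j ∈ Finset.Icc (1:ℤ) (n:ℤ), ((1:ℤ), j) ∈ F := by
    intro j hj
    have hsub : (F.filter fun p => p.1 = 1).image Prod.snd ⊆ Finset.Icc (1:ℤ) (n:ℤ) := by
      intro v hv
      simp only [Finset.mem_image, Finset.mem_filter] at hv
      obtain ⟨p, ⟨hpF, -⟩, rfl⟩ := hv
      exact hFc p hpF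
    have hinj : Set.InjOn Prod.snd (↑(F.filter fun p => p.1 = 1) : Set (ℤ × ℤ)) := by
      intro p hp q hq h
      simp only [Finset.coe_filter, Set.mem_setOf_eq] at hp hq
      exact Prod.ext (hp.2.trans hq.2.symm) h
    have hcard : (Finset.Icc (1:ℤ) (n:ℤ)).card
        ≤ ((F.filter fun p => p.1 = 1).image Prod.snd).card := by
      rw [Finset.card_image_of_injOn hinj]
      have h3 : (F.filter fun p => p.1 = 1).card = n := hr1
      rw [h3, Int.card_Icc]
      omega
    have heq := Finset.eq_of_subset_of_card_le hsub hcard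
    rw [← heq] at hj
    simp only [Finset.mem_image, Finset.mem_filter] at hj
    obtain ⟨p, ⟨hpF, hp1⟩, hp2⟩ := hj
    have hpe : p = (1, j) := Prod.ext hp1 hp2
    rwa [hpe] at hpF
  have hcolsub : ∀ j : ℤ, colset F j ⊆ Finset.Icc 1 (m:ℤ) :=
    fun j i hi => hFr _ (mem_colset.1 hi)
  have hcolM : ∀ j : ℤ, (m:ℤ) ∉ colset F j := fun j h => hMrow j (mem_colset.1 h)
  have hrange : ∀ s : ℕ, s ≤ 2*t → 1 ≤ idx s ∧ idx s ≤ (m:ℤ) := by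
    intro s hs
    have h4 := hidx_range s hs
    rwa [Finset.mem_Icc] at h4
  have hcol : ∀ j ∈ Finset.Icc (1:ℤ) (n:ℤ),
      2 + (∑ s ∈ Finset.range t,
          (ee (colset F j) (idx (2*s)) - ee (colset F j) (idx (2*s+1)))) +
        2 * ee (colset F j) (idx (2*t)) ≤ Vv (colset F j) 0 (m:ℤ) :=
    fun j hj => column_main (hcolsub j) (mem_colset.2 (h1row j hj)) (hcolM j)
      t idx hidx_mono hrange
  have hsum := Finset.sum_le_sum hcol
  have hd_eq : ∀ i : ℤ, d i = ∑ j ∈ Finset.Icc (1:ℤ) (n:ℤ), ee (colset F j) i := by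
    intro i
    rw [hd i, hb i]
    unfold ee
    rw [Finset.sum_sub_distrib, bsum_eq, rowSum_eq F n hFc i]
  have hbound : (horizBoundaryLen F : ℤ)
      = ∑ j ∈ Finset.Icc (1:ℤ) (n:ℤ), Vv (colset F j) 0 (m:ℤ) := by
    rw [horiz_eq, dn_decomp F m n hF hMrow, up_decomp F m n hF]
    push_cast
    rw [← Finset.sum_add_distrib]
    exact Finset.sum_congr rfl (fun j _ => (Vv_col F (m:ℤ) j).symm)
  have hL : ∑ j ∈ Finset.Icc (1:ℤ) (n:ℤ),
      (2 + (∑ s ∈ Finset.range t,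
          (ee (colset F j) (idx (2*s)) - ee (colset F j) (idx (2*s+1)))) +
        2 * ee (colset F j) (idx (2*t)))
      = 2 * n + (∑ s ∈ Finset.range t, (d (idx (2*s)) - d (idx (2*s+1))))
        + 2 * d (idx (2*t)) := by
    rw [Finset.sum_add_distrib, Finset.sum_add_distrib]
    congr 1
    congr 1
    · rw [Finset.sum_const, Int.card_Icc]
      have h5 : ((n:ℤ) + 1 - 1).toNat = n := by omega
      rw [h5, nsmul_eq_mul]
      ring
    · rw [Finset.sum_comm]
      refine Finset.sum_congr rfl (fun s _ => ?_)
      rw [Finset.sum_sub_distrib, ← hd_eq, ← hd_eq]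
    · rw [← Finset.mul_sum, ← hd_eq]
  rw [ge_iff_le, ← hL, hbound]
  exact hsum
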